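/- arXiv:2412.08472 — 4 statements merged into one kernel-verified Lean document; each statement's English description precedes it below -/
import Mathlib

section
/- Consider the 3-node path network with measured function F(x) = f(w32 · f(w21 · x)) for the activation f(x) = a1·x + a2·x², where a1 ≠ 0 and a2 ≠ 0 are real numbers. If w21, w32, w̃21, w̃32 are nonzero real numbers such that f(w32 · f(w21 · x)) = f(w̃32 · f(w̃21 · x)) for every x ∈ ℝ, then w21 = w̃21 and w32 = w̃32 (i.e., the path network is identifiable by exciting its source and measuring its sink). -/
/-- **Identifiability of the 3-node path network for a quadratic-plus-linear activation.**
For the activation `f x = a1 * x + a2 * x ^ 2` with `a1 ≠ 0` and `a2 ≠ 0`, if two consistent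
(nonzero) weight assignments of the path `1 → 2 → 3` produce the same measured function
`x ↦ f (w32 * f (w21 * x))`, then the weights coincide. -/
theorem stmt_0 (a1 a2 : ℝ) (ha1 : a1 ≠ 0) (ha2 : a2 ≠ 0)
    (f : ℝ → ℝ) (hf : ∀ x : ℝ, f x = a1 * x + a2 * x ^ 2)
    (w21 w32 w21' w32' : ℝ)
    (hw21 : w21 ≠ 0) (hw32 : w32 ≠ 0) (hw21' : w21' ≠ 0) (hw32' : w32' ≠ 0)
    (hFF : ∀ x : ℝ, f (w32 * f (w21 * x)) = f (w32' * f (w21' * x))) :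
    w21 = w21' ∧ w32 = w32' := by
  -- Expand the measured-function equality at x = 1, -1, 2, -2.
  have h1 := hFF 1
  have hm1 := hFF (-1)
  have h2 := hFF 2
  have hm2 := hFF (-2)
  simp only [hf] at h1 hm1 h2 hm2
  ring_nf at h1 hm1 h2 hm2
  -- coefficient differences of the degree-4 polynomials
  set c1 := a1 ^ 2 * (w32 * w21 - w32' * w21') with hc1
  set c2 := a1 * a2 * (w32 * w21 ^ 2 - w32' * w21' ^ 2)
      + a1 ^ 2 * a2 * (w32 ^ 2 * w21 ^ 2 - w32' ^ 2 * w21' ^ 2) with hc2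
  set c3 := 2 * a1 * a2 ^ 2 * (w32 ^ 2 * w21 ^ 3 - w32' ^ 2 * w21' ^ 3) with hc3
  set c4 := a2 ^ 3 * (w32 ^ 2 * w21 ^ 4 - w32' ^ 2 * w21' ^ 4) with hc4
  have e1 : c1 + c2 + c3 + c4 = 0 := by rw [hc1, hc2, hc3, hc4]; linear_combination h1
  have em1 : -c1 + c2 - c3 + c4 = 0 := by rw [hc1, hc2, hc3, hc4]; linear_combination hm1
  have e2 : 2*c1 + 4*c2 + 8*c3 + 16*c4 = 0 := by
    rw [hc1, hc2, hc3, hc4]; linear_combination h2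
  have em2 : -2*c1 + 4*c2 - 8*c3 + 16*c4 = 0 := by
    rw [hc1, hc2, hc3, hc4]; linear_combination hm2
  have hc3z : c3 = 0 := by linarith
  have hc1z : c1 = 0 := by linarith
  -- First coefficient: products of weights agree.
  have hp : w32 * w21 = w32' * w21' := by
    rw [hc1] at hc1z
    rcases mul_eq_zero.mp hc1z with h | h
    · exact absurd h (pow_ne_zero 2 ha1)
    · linarith
  -- Third coefficient gives w21 = w21'.
  have h3 : w32 ^ 2 * w21 ^ 3 = w32' ^ 2 * w21' ^ 3 := by
    rw [hc3] at hc3z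
    have h2a : (2:ℝ) * a1 * a2 ^ 2 ≠ 0 := by positivity
    have := mul_eq_zero.mp hc3z
    rcases this with h | h
    · exact absurd h h2a
    · linarith
  have hw21eq : w21 = w21' := by
    have hpne : w32 * w21 ≠ 0 := mul_ne_zero hw32 hw21
    have : (w32 * w21) ^ 2 * w21 = (w32' * w21') ^ 2 * w21' := by ring_nf; ring_nf at h3; linarith
    rw [← hp] at this
    exact mul_left_cancel₀ (pow_ne_zero 2 hpne) this
  refine ⟨hw21eq, ?_⟩
  have : w32 * w21 = w32' * w21 := by rw [hp, hw21eq]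
  exact mul_right_cancel₀ hw21 this
end

section
/- Let f : ℝ → ℝ be analytic with f(0) = 0, f′(0) ≠ 0 and f″(0) ≠ 0. If w21, w32, w̃21, w̃32 are nonzero real numbers such that f(w32 · f(w21 · x)) = f(w̃32 · f(w̃21 · x)) for all x in some neighborhood of 0, then w21 = w̃21 and w32 = w̃32. In other words, the 3-node path network is identifiable by exciting the source and measuring the sink for every analytic activation f with f(0) = 0 whose first two MacLaurin coefficients are nonzero. -/
open Filter

lemma aux_hasDerivAt (f : ℝ → ℝ) (hf : ∀ x : ℝ, AnalyticAt ℝ f x) (u v : ℝ) (x : ℝ) :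
    HasDerivAt (fun x => f (v * f (u * x)))
      (deriv f (v * f (u * x)) * (v * (deriv f (u * x) * u))) x := by
  have h1 : HasDerivAt (fun y : ℝ => u * y) u x := by
    simpa using (hasDerivAt_id x).const_mul u
  have h2 : HasDerivAt (fun y : ℝ => f (u * y)) (deriv f (u * x) * u) x :=
    ((hf _).differentiableAt.hasDerivAt).comp x h1
  have h3 : HasDerivAt (fun y : ℝ => v * f (u * y)) (v * (deriv f (u * x) * u)) x :=
    h2.const_mul v
  exact ((hf _).differentiableAt.hasDerivAt).comp x h3

lemma aux_deriv2 (f : ℝ → ℝ) (hf : ∀ x : ℝ, AnalyticAt ℝ f x) (hf0 : f 0 = 0) (u v : ℝ) :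
    deriv (deriv (fun x => f (v * f (u * x)))) 0 =
      (deriv (deriv f) 0 * (v * (deriv f 0 * u))) * (v * (deriv f 0 * u))
        + deriv f 0 * (v * ((deriv (deriv f) 0 * u) * u)) := by
  have hdf : ∀ x : ℝ, AnalyticAt ℝ (deriv f) x := by
    have h0 : AnalyticOnNhd ℝ f Set.univ := fun x _ => hf x
    exact fun x => h0.deriv x (Set.mem_univ x)
  have hgd : deriv (fun x => f (v * f (u * x)))
      = fun x => deriv f (v * f (u * x)) * (v * (deriv f (u * x) * u)) :=
    funext fun x => (aux_hasDerivAt f hf u v x).deriv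
  rw [hgd]
  have h1 : HasDerivAt (fun y : ℝ => u * y) u 0 := by
    simpa using (hasDerivAt_id (0:ℝ)).const_mul u
  have h3 : HasDerivAt (fun y : ℝ => v * f (u * y)) (v * (deriv f (u * 0) * u)) 0 :=
    (((hf _).differentiableAt.hasDerivAt).comp 0 h1).const_mul v
  have hG1 : HasDerivAt (fun x => deriv f (v * f (u * x)))
      (deriv (deriv f) (v * f (u * 0)) * (v * (deriv f (u * 0) * u))) 0 :=
    ((hdf _).differentiableAt.hasDerivAt).comp 0 h3
  have hG2 : HasDerivAt (fun x => v * (deriv f (u * x) * u))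
      (v * ((deriv (deriv f) (u * 0) * u) * u)) 0 :=
    ((((hdf _).differentiableAt.hasDerivAt).comp 0 h1).mul_const u).const_mul v
  have := (hG1.mul hG2).deriv
  simp only [mul_zero, hf0] at this; exact this

/-- **Identifiability of the 3-node path network for generic analytic activations.**
Let `f` be analytic on `ℝ` with `f 0 = 0`, `f' 0 ≠ 0` and `f'' 0 ≠ 0` (i.e. its first two
MacLaurin coefficients are nonzero). If two consistent (nonzero) weight assignments of the
path `1 → 2 → 3` produce measured functions that agree on some neighborhood of `0`, then the
weights coincide. -/
theorem stmt_3 (f : ℝ → ℝ) (hf : ∀ x : ℝ, AnalyticAt ℝ f x) (hf0 : f 0 = 0)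
    (hf1 : deriv f 0 ≠ 0) (hf2 : iteratedDeriv 2 f 0 ≠ 0)
    (w21 w32 w21' w32' : ℝ)
    (hw21 : w21 ≠ 0) (hw32 : w32 ≠ 0) (hw21' : w21' ≠ 0) (hw32' : w32' ≠ 0)
    (hFF : ∀ᶠ x in nhds (0 : ℝ), f (w32 * f (w21 * x)) = f (w32' * f (w21' * x))) :
    w21 = w21' ∧ w32 = w32' := by
  set a := deriv f 0 with ha
  have hb : deriv (deriv f) 0 = iteratedDeriv 2 f 0 := by
    rw [iteratedDeriv_succ, iteratedDeriv_one]
  set b := deriv (deriv f) 0 with hbdef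
  have hb2 : b ≠ 0 := hb ▸ hf2
  have hEq : (fun x => f (w32 * f (w21 * x))) =ᶠ[nhds (0:ℝ)]
      (fun x => f (w32' * f (w21' * x))) := hFF
  -- first derivatives at 0 agree
  have hd1 : a * (w32 * (a * w21)) = a * (w32' * (a * w21')) := by
    have := hEq.deriv_eq
    rw [(aux_hasDerivAt f hf w21 w32 0).deriv, (aux_hasDerivAt f hf w21' w32' 0).deriv] at this
    simpa [hf0, ha] using this
  have hd2 : (b * (w32 * (a * w21))) * (w32 * (a * w21)) + a * (w32 * ((b * w21) * w21))
      = (b * (w32' * (a * w21'))) * (w32' * (a * w21')) + a * (w32' * ((b * w21') * w21')) := by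
    have := hEq.deriv.deriv_eq
    rw [aux_deriv2 f hf hf0 w21 w32, aux_deriv2 f hf hf0 w21' w32'] at this
    exact this
  have hP : w32 * w21 = w32' * w21' := by
    have ha2 : a * a ≠ 0 := mul_ne_zero hf1 hf1
    have : a * a * (w32 * w21) = a * a * (w32' * w21') := by linear_combination hd1
    exact mul_left_cancel₀ ha2 this
  have hu : w21 = w21' := by
    have key : w32 * w21 * w21 = w32' * w21' * w21' := by
      have h2 : a * b * (w32 * w21 * w21) = a * b * (w32' * w21' * w21') := by
        linear_combination hd2 - a * a * b * (w32 * w21 + w32' * w21') * hP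
      exact mul_left_cancel₀ (mul_ne_zero hf1 hb2) h2
    have hP2 : w32 * w21 ≠ 0 := by
      rw [hP]; exact mul_ne_zero hw32' hw21'
    have : (w32 * w21) * w21 = (w32 * w21) * w21' := by
      linear_combination key - w21' * hP
    exact mul_left_cancel₀ hP2 this
  refine ⟨hu, ?_⟩
  subst hu
  exact mul_right_cancel₀ hw21 hP
end

section
/- (Lemma on exponential asymptotics, Lemma 4) Let a fully-connected layered feed-forward network of depth L with one source and one sink have activation f(x) = e^x − 1 and weight family W ∈ W_o. Then: (i) for every layer l ∈ {0,…,L} and every node i ∈ N^l, F^l_i(x) → +∞ as x → +∞; and (ii) for every l ∈ {1,…,L}, every i ∈ N^l and every j ∈ N^{l−1}, the ratio (Σ_{k ∈ N^{l−1}, k ≥ j} w^l_{ik} F^{l−1}_k(x)) / (w^l_{ij} F^{l−1}_j(x)) tends to 1 as x → +∞; equivalently Σ_{k ≥ j} w^l_{ik} F^{l−1}_k(x) = w^l_{ij} F^{l−1}_j(x)(1 + o(1)) as x → +∞. -/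
open Finset Filter

/-- Node outputs of the fully-connected layered feed-forward network with activation
`f x = e^x - 1` and layer sizes `n 0, …, n L`: `expOut n w 0 i x = x` (the source) and
`expOut n w (l+1) i x = exp (∑_{j < n l} w^{l+1}_{ij} · expOut n w l j x) - 1`, where
`w (l+1) i j` is the weight of the edge from node `j` of layer `l` to node `i` of layer
`l + 1` (nodes are numbered `0, …, n l - 1`; the "first" node of a layer is node `0`). -/
noncomputable def expOut (n : ℕ → ℕ) (w : ℕ → ℕ → ℕ → ℝ) : ℕ → ℕ → ℝ → ℝ
  | 0, _, x => x
  | l + 1, i, x =>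
      Real.exp (∑ j ∈ Finset.range (n l), w (l + 1) i j * expOut n w l j x) - 1

/-- The class `W_o` of weight families: all weights are positive and, in each layer and for
each source node `j`, the weights are strictly decreasing in the destination node index
(`w^l_{1j} > w^l_{2j} > … > w^l_{n_l j}` in 1-based notation). -/
def Wo (L : ℕ) (n : ℕ → ℕ) (w : ℕ → ℕ → ℕ → ℝ) : Prop :=
  (∀ l < L, ∀ i < n (l + 1), ∀ j < n l, 0 < w (l + 1) i j) ∧
  (∀ l < L, ∀ j < n l, ∀ i i' : ℕ, i < i' → i' < n (l + 1) → w (l + 1) i' j < w (l + 1) i j)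

lemma sum_tendsto_atTop_aux {ι : Type*} (s : Finset ι) (hs : s.Nonempty) (f : ι → ℝ → ℝ)
    (hf : ∀ t ∈ s, Tendsto (f t) atTop atTop) :
    Tendsto (fun x => ∑ t ∈ s, f t x) atTop atTop := by
  obtain ⟨t0, ht0⟩ := hs
  refine tendsto_atTop_mono' atTop ?_ (hf t0 ht0)
  have hev : ∀ᶠ x in atTop, ∀ t ∈ s, 0 ≤ f t x := by
    rw [eventually_all_finset]
    exact fun t ht => (hf t ht).eventually_ge_atTop 0
  filter_upwards [hev] with x hx
  exact Finset.single_le_sum hx ht0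

section aux
variable {L : ℕ} {n : ℕ → ℕ} {w : ℕ → ℕ → ℕ → ℝ}

lemma expOut_tendsto (hpos : ∀ l ≤ L, 0 < n l) (hw : Wo L n w) :
    ∀ l ≤ L, ∀ i < n l, Tendsto (fun x => expOut n w l i x) atTop atTop := by
  intro l
  induction l with
  | zero => intro _ i _; exact tendsto_id
  | succ m ih =>
    intro hm i hi
    have hmL : m < L := hm
    have hA : Tendsto (fun x => ∑ j ∈ Finset.range (n m),
        w (m + 1) i j * expOut n w m j x) atTop atTop := by
      refine sum_tendsto_atTop_aux _ ⟨0, Finset.mem_range.2 (hpos m hmL.le)⟩ _ ?_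
      intro t ht
      exact (ih hmL.le t (Finset.mem_range.1 ht)).const_mul_atTop
        (hw.1 m hmL i hi t (Finset.mem_range.1 ht))
    have : Tendsto (fun x => Real.exp (∑ j ∈ Finset.range (n m),
        w (m + 1) i j * expOut n w m j x) - 1) atTop atTop :=
      tendsto_atTop_add_const_right atTop (-1) (Real.tendsto_exp_atTop.comp hA)
    simpa [expOut] using this

lemma expOut_ratio_zero (hn0 : n 0 = 1) (hpos : ∀ l ≤ L, 0 < n l) (hw : Wo L n w) :
    ∀ l ≤ L, ∀ j k : ℕ, j < k → k < n l →
      Tendsto (fun x => expOut n w l k x / expOut n w l j x) atTop (nhds 0) := by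
  rintro (_ | m) hl j k hjk hk
  · omega
  · have hmL : m < L := hl
    have hj : j < n (m + 1) := hjk.trans hk
    set B : ℝ → ℝ := fun x => ∑ t ∈ Finset.range (n m), w (m + 1) k t * expOut n w m t x
      with hBdef
    set C : ℝ → ℝ := fun x => ∑ t ∈ Finset.range (n m), w (m + 1) j t * expOut n w m t x
      with hCdef
    have hsumT : ∀ c : ℕ → ℝ, (∀ t < n m, 0 < c t) →
        Tendsto (fun x => ∑ t ∈ Finset.range (n m), c t * expOut n w m t x) atTop atTop := by
      intro c hc
      refine sum_tendsto_atTop_aux _ ⟨0, Finset.mem_range.2 (hpos m hmL.le)⟩ _ ?_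
      intro t ht
      exact (expOut_tendsto hpos hw m hmL.le t (Finset.mem_range.1 ht)).const_mul_atTop
        (hc t (Finset.mem_range.1 ht))
    have hB : Tendsto B atTop atTop :=
      hsumT _ (fun t ht => hw.1 m hmL k hk t ht)
    have hC : Tendsto C atTop atTop :=
      hsumT _ (fun t ht => hw.1 m hmL j hj t ht)
    have hCB : Tendsto (fun x => C x - B x) atTop atTop := by
      have : Tendsto (fun x => ∑ t ∈ Finset.range (n m),
          (w (m + 1) j t - w (m + 1) k t) * expOut n w m t x) atTop atTop :=
        hsumT _ (fun t ht => sub_pos.2 (hw.2 m hmL t ht j k hjk hk))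
      refine this.congr fun x => ?_
      simp [hBdef, hCdef, ← Finset.sum_sub_distrib, sub_mul]
    have hBC : Tendsto (fun x => B x - C x) atTop atBot := by
      have := tendsto_neg_atTop_atBot.comp hCB
      refine this.congr fun x => ?_
      simp [Function.comp]
    -- limit function
    have hlim : Tendsto (fun x => 2 * Real.exp (B x - C x)) atTop (nhds 0) := by
      have := (Real.tendsto_exp_atBot.comp hBC).const_mul (2 : ℝ)
      simpa using this
    have heq : ∀ x, expOut n w (m + 1) k x / expOut n w (m + 1) j x
        = (Real.exp (B x) - 1) / (Real.exp (C x) - 1) := fun x => rfl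
    rw [show (fun x => expOut n w (m + 1) k x / expOut n w (m + 1) j x)
        = fun x => (Real.exp (B x) - 1) / (Real.exp (C x) - 1) from funext heq]
    refine tendsto_of_tendsto_of_tendsto_of_le_of_le' tendsto_const_nhds hlim ?_ ?_
    · filter_upwards [hB.eventually_ge_atTop 0, hC.eventually_ge_atTop 1] with x hx1 hx2
      have h1 : (0:ℝ) ≤ Real.exp (B x) - 1 := by
        have := Real.one_le_exp hx1; linarith
      have h2 : (0:ℝ) < Real.exp (C x) - 1 := by
        have := Real.exp_le_exp.2 hx2
        nlinarith [Real.add_one_le_exp (1:ℝ)]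
      exact div_nonneg h1 h2.le
    · filter_upwards [hC.eventually_ge_atTop 1] with x hx
      have hec : Real.exp 1 ≤ Real.exp (C x) := Real.exp_le_exp.2 hx
      have h2 : (2:ℝ) ≤ Real.exp (C x) := by nlinarith [Real.add_one_le_exp (1:ℝ)]
      have hd : Real.exp (C x) / 2 ≤ Real.exp (C x) - 1 := by linarith
      have hd0 : (0:ℝ) < Real.exp (C x) / 2 := by positivity
      have hstep : (Real.exp (B x) - 1) / (Real.exp (C x) - 1)
          ≤ Real.exp (B x) / (Real.exp (C x) / 2) :=
        div_le_div₀ (Real.exp_nonneg _) (by linarith) hd0 hd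
      refine hstep.trans_eq ?_
      rw [Real.exp_sub]
      field_simp
end aux

/-- **(Lemma 4, lemma1: exponential asymptotics).** For a fully-connected layered
feed-forward network of depth `L ≥ 1` with one source and one sink, activation
`f x = e^x - 1` and weight family `W ∈ W_o`: (i) every node output tends to `+∞` as
`x → +∞`; and (ii) for every layer `l + 1`, node `i` of layer `l + 1` and node `j` of layer
`l`, the tail sum `∑_{k ≥ j} w^{l+1}_{ik} F^l_k (x)` is `w^{l+1}_{ij} F^l_j (x) (1 + o(1))`,
i.e. their ratio tends to `1` as `x → +∞`. -/
theorem stmt_11 (L : ℕ) (hL : 1 ≤ L) (n : ℕ → ℕ) (hn0 : n 0 = 1) (hnL : n L = 1)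
    (hpos : ∀ l ≤ L, 0 < n l) (w : ℕ → ℕ → ℕ → ℝ) (hw : Wo L n w) :
    (∀ l ≤ L, ∀ i < n l,
      Tendsto (fun x => expOut n w l i x) atTop atTop) ∧
    (∀ l < L, ∀ i < n (l + 1), ∀ j < n l,
      Tendsto
        (fun x => (∑ k ∈ Finset.Ico j (n l), w (l + 1) i k * expOut n w l k x) /
          (w (l + 1) i j * expOut n w l j x))
        atTop (nhds 1)) := by
  refine ⟨expOut_tendsto hpos hw, ?_⟩
  intro l hl i hi j hj
  simp only [Finset.sum_div]
  have hterm : ∀ k ∈ Finset.Ico j (n l),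
      Tendsto (fun x => (w (l + 1) i k * expOut n w l k x) /
          (w (l + 1) i j * expOut n w l j x)) atTop
        (nhds (if k = j then (1 : ℝ) else 0)) := by
    intro k hk
    obtain ⟨hjk, hkn⟩ := Finset.mem_Ico.1 hk
    by_cases hkj : k = j
    · subst hkj
      rw [if_pos rfl]
      refine Tendsto.congr' ?_ tendsto_const_nhds
      filter_upwards [(expOut_tendsto hpos hw l hl.le k hkn).eventually_gt_atTop 0] with x hx
      exact (div_self (mul_pos (hw.1 l hl i hi k hkn) hx).ne').symm
    · rw [if_neg hkj]
      have hjk' : j < k := lt_of_le_of_ne hjk (Ne.symm hkj)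
      have h0 := (expOut_ratio_zero hn0 hpos hw l hl.le j k hjk' hkn).const_mul
        (w (l + 1) i k / w (l + 1) i j)
      rw [mul_zero] at h0
      refine h0.congr fun x => ?_
      rw [mul_div_mul_comm]
  have hsum := tendsto_finset_sum (Finset.Ico j (n l)) hterm
  have : (∑ k ∈ Finset.Ico j (n l), if k = j then (1 : ℝ) else 0) = 1 := by
    rw [Finset.sum_ite_eq' (Finset.Ico j (n l)) j (fun _ => (1:ℝ))]
    simp [Finset.mem_Ico, hj]
  rwa [this] at hsum
end

section
/- (Proposition: identifiability of the exponential network, pr:exp) Let a fully-connected layered feed-forward network of depth L with one source and one sink have activation f(x) = e^x − 1. If W, W̃ ∈ W_o are two weight families whose measured functions coincide, F_W(x) = F_{W̃}(x) for all x ∈ ℝ, then W = W̃. That is, the network with this activation is identifiable within the class W_o by exciting the source and measuring the sink. -/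
open Finset Filter Real Topology

lemma sum_dom {m : ℕ} (hm : 0 < m) (a : ℕ → ℝ) (F : ℕ → ℝ → ℝ)
    (ha : ∀ k < m, 0 < a k) (hF : ∀ k, k < m → ∀ x : ℝ, 0 < x → 0 < F k x)
    (hF0 : Tendsto (F 0) atTop atTop) :
    Tendsto (fun x => ∑ k ∈ Finset.range m, a k * F k x) atTop atTop := by
  refine tendsto_atTop_mono' atTop ?_ (hF0.const_mul_atTop (ha 0 hm))
  filter_upwards [eventually_gt_atTop (0:ℝ)] with x hx
  exact Finset.single_le_sum
    (fun k hk => le_of_lt (mul_pos (ha k (mem_range.mp hk)) (hF k (mem_range.mp hk) x hx)))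
    (mem_range.mpr hm)

section net
variable {L : ℕ} {n : ℕ → ℕ} {w : ℕ → ℕ → ℕ → ℝ}

lemma out_pos (hpos : ∀ l ≤ L, 0 < n l) (hw : Wo L n w) :
    ∀ l ≤ L, ∀ i < n l, ∀ x : ℝ, 0 < x → 0 < expOut n w l i x := by
  intro l
  induction l with
  | zero => intro _ i _ x hx; simpa [expOut] using hx
  | succ l ih =>
    intro hl i hi x hx
    have hlL : l < L := lt_of_lt_of_le (Nat.lt_succ_self l) hl
    have hsum : 0 < ∑ j ∈ Finset.range (n l), w (l + 1) i j * expOut n w l j x := by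
      refine Finset.sum_pos (fun j hj => ?_) ?_
      · exact mul_pos (hw.1 l hlL i hi j (mem_range.mp hj))
          (ih hlL.le j (mem_range.mp hj) x hx)
      · exact Finset.nonempty_range_iff.mpr (hpos l hlL.le).ne'
    show 0 < Real.exp _ - 1
    simpa using Real.one_lt_exp_iff.mpr hsum


lemma out_top (hpos : ∀ l ≤ L, 0 < n l) (hw : Wo L n w) :
    ∀ l ≤ L, ∀ i < n l, Tendsto (expOut n w l i) atTop atTop := by
  intro l
  induction l with
  | zero => intro _ i _; exact tendsto_id
  | succ l ih =>
    intro hl i hi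
    have hlL : l < L := lt_of_lt_of_le (Nat.lt_succ_self l) hl
    have hsum : Tendsto (fun x => ∑ j ∈ Finset.range (n l),
        w (l + 1) i j * expOut n w l j x) atTop atTop :=
      sum_dom (hpos l hlL.le) _ _ (fun k hk => hw.1 l hlL i hi k hk)
        (fun k hk x hx => out_pos hpos hw l hlL.le k hk x hx)
        (ih hlL.le 0 (hpos l hlL.le))
    have : Tendsto (fun x => Real.exp (∑ j ∈ Finset.range (n l),
        w (l + 1) i j * expOut n w l j x) - 1) atTop atTop :=
      tendsto_atTop_add_const_right _ (-1) (Real.tendsto_exp_atTop.comp hsum)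
    simpa [expOut, sub_eq_add_neg] using this

lemma g_top (hpos : ∀ l ≤ L, 0 < n l) (hw : Wo L n w) {l : ℕ} (hl : l < L)
    {i : ℕ} (hi : i < n (l + 1)) :
    Tendsto (fun x => ∑ j ∈ Finset.range (n l),
      w (l + 1) i j * expOut n w l j x) atTop atTop :=
  sum_dom (hpos l hl.le) _ _ (fun k hk => hw.1 l hl i hi k hk)
    (fun k hk x hx => out_pos hpos hw l hl.le k hk x hx)
    (out_top hpos hw l hl.le 0 (hpos l hl.le))

lemma out_ratio (hpos : ∀ l ≤ L, 0 < n l) (hw : Wo L n w) {l : ℕ} (hl : l < L)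
    {i i' : ℕ} (hii : i < i') (hi' : i' < n (l + 1)) :
    Tendsto (fun x => expOut n w (l + 1) i' x / expOut n w (l + 1) i x)
      atTop (𝓝 0) := by
  have hi : i < n (l + 1) := hii.trans hi'
  set g : ℝ → ℝ := fun x => ∑ j ∈ Finset.range (n l), w (l + 1) i j * expOut n w l j x with hg
  set g' : ℝ → ℝ := fun x => ∑ j ∈ Finset.range (n l), w (l + 1) i' j * expOut n w l j x with hg'
  have hdiff : Tendsto (fun x => g x - g' x) atTop atTop := by
    have : (fun x => g x - g' x) = fun x => ∑ j ∈ Finset.range (n l),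
        (w (l + 1) i j - w (l + 1) i' j) * expOut n w l j x := by
      funext x
      simp [hg, hg', ← Finset.sum_sub_distrib, sub_mul]
    rw [this]
    exact sum_dom (hpos l hl.le) _ _
      (fun k hk => sub_pos.mpr (hw.2 l hl k hk i i' hii hi'))
      (fun k hk x hx => out_pos hpos hw l hl.le k hk x hx)
      (out_top hpos hw l hl.le 0 (hpos l hl.le))
  have hgt : Tendsto g atTop atTop := g_top hpos hw hl hi
  -- upper bound : 2 * exp (g' - g) tends to 0
  have hub : Tendsto (fun x => 2 * Real.exp (g' x - g x)) atTop (𝓝 0) := by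
    have h1 : Tendsto (fun x => g' x - g x) atTop atBot := by
      have := tendsto_neg_atTop_atBot.comp hdiff
      simpa [Function.comp_def, neg_sub] using this
    have := Real.tendsto_exp_atBot.comp h1
    simpa using (this.const_mul 2)
  refine tendsto_of_tendsto_of_tendsto_of_le_of_le' tendsto_const_nhds hub ?_ ?_
  · filter_upwards [eventually_gt_atTop (0:ℝ)] with x hx
    exact le_of_lt (div_pos (out_pos hpos hw (l+1) hl i' hi' x hx)
      (out_pos hpos hw (l+1) hl i hi x hx))
  · filter_upwards [hgt.eventually_ge_atTop 1] with x hx1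
    have hge : Real.exp 1 ≤ Real.exp (g x) := Real.exp_le_exp.mpr hx1
    have h2 : (Real.exp (g x)) / 2 ≤ Real.exp (g x) - 1 := by
      nlinarith [Real.exp_one_gt_d9, hge]
    have hpos2 : (0:ℝ) < Real.exp (g x) / 2 := by positivity
    have hnum : expOut n w (l+1) i' x ≤ Real.exp (g' x) := by
      show Real.exp (g' x) - 1 ≤ Real.exp (g' x)
      linarith
    have hcalc : expOut n w (l+1) i' x / expOut n w (l+1) i x ≤
        Real.exp (g' x) / (Real.exp (g x) / 2) := by
      show (Real.exp (g' x) - 1) / (Real.exp (g x) - 1) ≤ _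
      apply div_le_div₀ (le_of_lt (Real.exp_pos _)) (by linarith) hpos2 h2
    refine hcalc.trans (le_of_eq ?_)
    rw [Real.exp_sub]
    field_simp

end net

lemma out_congr {n : ℕ → ℕ} {w w' : ℕ → ℕ → ℕ → ℝ} :
    ∀ l, (∀ l' < l, ∀ i < n (l' + 1), ∀ j < n l', w (l' + 1) i j = w' (l' + 1) i j) →
    ∀ i < n l, ∀ x : ℝ, expOut n w l i x = expOut n w' l i x := by
  intro l
  induction l with
  | zero => intro _ i _ x; simp [expOut]
  | succ l ih =>
    intro h i hi x
    show Real.exp _ - 1 = Real.exp _ - 1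
    congr 1
    congr 1
    refine Finset.sum_congr rfl (fun j hj => ?_)
    rw [h l (Nat.lt_succ_self l) i hi j (mem_range.mp hj),
      ih (fun l' hl' => h l' (hl'.trans (Nat.lt_succ_self l))) j (mem_range.mp hj) x]

lemma ab_lemma {A B R R' S : ℝ → ℝ} {c : ℝ}
    (hSdef : ∀ x, S x = (A x + R x) - (B x + R' x))
    (hS : Tendsto S atTop (𝓝 c))
    (hA : Tendsto A atTop atTop) (hB : Tendsto B atTop atTop)
    (hRA : Tendsto (fun x => R x / A x) atTop (𝓝 0))
    (hR'B : Tendsto (fun x => R' x / B x) atTop (𝓝 0))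
    (hApos : ∀ᶠ x in atTop, 0 < A x) (hBpos : ∀ᶠ x in atTop, 0 < B x)
    (hR : ∀ᶠ x in atTop, 0 ≤ R x) (hR' : ∀ᶠ x in atTop, 0 ≤ R' x) :
    Tendsto (fun x => A x / B x) atTop (𝓝 1) := by
  have hU : Tendsto (fun x => B x + R' x) atTop atTop := by
    refine tendsto_atTop_mono' atTop ?_ hB
    filter_upwards [hR'] with x hx; linarith
  have hTU : Tendsto (fun x => (A x + R x) / (B x + R' x)) atTop (𝓝 1) := by
    have h1 : Tendsto (fun x => S x / (B x + R' x) + 1) atTop (𝓝 1) := by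
      simpa using (hS.div_atTop hU).add tendsto_const_nhds
    refine h1.congr' ?_
    filter_upwards [hBpos, hR', hU.eventually_gt_atTop 0] with x hB0 hR0 hU0
    field_simp
    rw [hSdef x]; ring
  have hAT : Tendsto (fun x => A x / (A x + R x)) atTop (𝓝 1) := by
    have h0 : Tendsto (fun x => 1 + R x / A x) atTop (𝓝 1) := by
      simpa using (tendsto_const_nhds (x := (1:ℝ))).add hRA
    have h1 : Tendsto (fun x => (1 + R x / A x)⁻¹) atTop (𝓝 1) := by
      simpa using h0.inv₀ one_ne_zero
    refine h1.congr' ?_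
    filter_upwards [hApos, hR] with x hA0 hR0
    have h2 : 0 < A x + R x := by linarith
    field_simp
  have hUB : Tendsto (fun x => (B x + R' x) / B x) atTop (𝓝 1) := by
    have h0 : Tendsto (fun x => 1 + R' x / B x) atTop (𝓝 1) := by
      simpa using (tendsto_const_nhds (x := (1:ℝ))).add hR'B
    refine h0.congr' ?_
    filter_upwards [hBpos] with x hB0
    field_simp
  have := (hAT.mul hTU).mul hUB
  rw [one_mul, one_mul] at this
  refine this.congr' ?_
  filter_upwards [hApos, hBpos, hR, hR'] with x hA0 hB0 hR0 hR'0
  have h2 : A x + R x ≠ 0 := by positivity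
  have h3 : B x + R' x ≠ 0 := by positivity
  field_simp

lemma exp_ratio {g g' : ℝ → ℝ} {r : ℝ} (hr : 0 < r)
    (hg : Tendsto g atTop atTop) (hg' : Tendsto g' atTop atTop)
    (h : Tendsto (fun x => (Real.exp (g x) - 1) / (Real.exp (g' x) - 1)) atTop (𝓝 r)) :
    Tendsto (fun x => g x - g' x) atTop (𝓝 (Real.log r)) := by
  have key : ∀ (f : ℝ → ℝ), Tendsto f atTop atTop →
      Tendsto (fun x => (Real.exp (f x) - 1) / Real.exp (f x)) atTop (𝓝 1) := by
    intro f hf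
    have h1 : Tendsto (fun x => 1 - Real.exp (-f x)) atTop (𝓝 1) := by
      have h2 : Tendsto (fun x => Real.exp (-f x)) atTop (𝓝 0) := by
        have := Real.tendsto_exp_atBot.comp (tendsto_neg_atTop_atBot.comp hf)
        simpa [Function.comp_def] using this
      simpa using (tendsto_const_nhds (x := (1:ℝ))).sub h2
    refine h1.congr (fun x => ?_)
    rw [sub_div, div_self (Real.exp_pos _).ne', Real.exp_neg, one_div]
  have h2 := key g hg
  have h3 := key g' hg'
  have h4 : Tendsto (fun x => Real.exp (g x - g' x)) atTop (𝓝 r) := by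
    have hprod := (h.mul ((h2.inv₀ one_ne_zero))).mul h3
    rw [inv_one, mul_one, mul_one] at hprod
    refine hprod.congr' ?_
    filter_upwards [hg.eventually_ge_atTop 1, hg'.eventually_ge_atTop 1] with x h5 h6
    have e1 : (1:ℝ) < Real.exp (g x) := by
      have := Real.exp_le_exp.mpr h5; nlinarith [Real.exp_one_gt_d9]
    have e2 : (1:ℝ) < Real.exp (g' x) := by
      have := Real.exp_le_exp.mpr h6; nlinarith [Real.exp_one_gt_d9]
    rw [Real.exp_sub]
    have n1 : Real.exp (g x) - 1 ≠ 0 := by linarith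
    have n2 : Real.exp (g' x) - 1 ≠ 0 := by linarith
    field_simp
  have h5 : Tendsto (fun x => Real.log (Real.exp (g x - g' x))) atTop (𝓝 (Real.log r)) :=
    ((Real.continuousAt_log hr.ne').tendsto).comp h4
  refine h5.congr (fun x => Real.log_exp _)

lemma lin_tendsto {a c : ℝ} (h : Tendsto (fun x : ℝ => a * x) atTop (𝓝 c)) :
    a = 0 ∧ c = 0 := by
  have ha : a = 0 := by
    rcases lt_trichotomy a 0 with h1 | h1 | h1
    · exact absurd h (not_tendsto_nhds_of_tendsto_atBot
        ((tendsto_id (α := ℝ)).const_mul_atTop_of_neg h1) c)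
    · exact h1
    · exact absurd h (not_tendsto_nhds_of_tendsto_atTop
        ((tendsto_id (α := ℝ)).const_mul_atTop h1) c)
  subst ha
  refine ⟨rfl, tendsto_nhds_unique (a := c) (b := (0:ℝ)) h ?_⟩
  simpa using tendsto_const_nhds (x := (0:ℝ)) (f := atTop)

lemma master (L : ℕ) (n : ℕ → ℕ) (hn0 : n 0 = 1) (hpos : ∀ l ≤ L, 0 < n l)
    (w w' : ℕ → ℕ → ℕ → ℝ) (hw : Wo L n w) (hw' : Wo L n w') :
    ∀ l, l < L → ∀ M j₀, j₀ + M = n l → ∀ u v : ℕ → ℝ, ∀ c : ℝ,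
    (∀ j, j₀ ≤ j → j < n l → 0 < u j) → (∀ j, j₀ ≤ j → j < n l → 0 < v j) →
    Tendsto (fun x => ∑ j ∈ Finset.Ico j₀ (n l),
      (u j * expOut n w l j x - v j * expOut n w' l j x)) atTop (𝓝 c) →
    c = 0 ∧ (∀ j, j₀ ≤ j → j < n l → u j = v j) ∧
      (j₀ < n l → ∀ l' < l, ∀ i < n (l' + 1),
        (l' + 1 = l → j₀ ≤ i) → ∀ j < n l', w (l' + 1) i j = w' (l' + 1) i j) := by
  intro l
  induction l using Nat.strong_induction_on with
  | _ l IH =>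
  intro hlL M
  induction M with
  | zero =>
    intro j₀ hj₀ u v c hu hv hS
    have he : Finset.Ico j₀ (n l) = ∅ := by
      have : j₀ = n l := by omega
      simp [this]
    rw [he] at hS
    simp only [Finset.sum_empty] at hS
    refine ⟨((by simpa using hS : (0:ℝ) = c)).symm, ?_, ?_⟩
    · intro j hj1 hj2; omega
    · intro hlt; omega
  | succ M IHM =>
    intro j₀ hj₀ u v c hu hv hS
    have hj₀lt : j₀ < n l := by omega
    cases l with
    | zero =>
      have hj00 : j₀ = 0 := by omega
      subst hj00
      have hS' : Tendsto (fun x => (u 0 - v 0) * x) atTop (𝓝 c) := by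
        refine hS.congr (fun x => ?_)
        rw [hn0]
        simp [expOut]
        ring
      obtain ⟨h1, h2⟩ := lin_tendsto hS'
      refine ⟨h2, ?_, ?_⟩
      · intro j hj1 hj2
        rw [hn0] at hj2
        interval_cases j
        linarith
      · intro _ l' hl'; omega
    | succ lp =>
      have hlpL : lp < L := by omega
      have hj₀n : j₀ < n (lp + 1) := hj₀lt
      set F : ℕ → ℝ → ℝ := fun j => expOut n w (lp + 1) j with hF
      set F' : ℕ → ℝ → ℝ := fun j => expOut n w' (lp + 1) j with hF'
      set g : ℕ → ℝ → ℝ := fun j x => ∑ k ∈ Finset.range (n lp),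
        w (lp + 1) j k * expOut n w lp k x with hg
      set g' : ℕ → ℝ → ℝ := fun j x => ∑ k ∈ Finset.range (n lp),
        w' (lp + 1) j k * expOut n w' lp k x with hg'
      have hFg : ∀ j x, F j x = Real.exp (g j x) - 1 := fun j x => rfl
      have hFg' : ∀ j x, F' j x = Real.exp (g' j x) - 1 := fun j x => rfl
      have huj : 0 < u j₀ := hu j₀ le_rfl hj₀lt
      have hvj : 0 < v j₀ := hv j₀ le_rfl hj₀lt
      have hFtop : ∀ j, j < n (lp+1) → Tendsto (F j) atTop atTop :=
        fun j hj => out_top hpos hw (lp+1) (by omega) j hj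
      have hF'top : ∀ j, j < n (lp+1) → Tendsto (F' j) atTop atTop :=
        fun j hj => out_top hpos hw' (lp+1) (by omega) j hj
      have hFpos : ∀ j, j < n (lp+1) → ∀ x : ℝ, 0 < x → 0 < F j x :=
        fun j hj x hx => out_pos hpos hw (lp+1) (by omega) j hj x hx
      have hF'pos : ∀ j, j < n (lp+1) → ∀ x : ℝ, 0 < x → 0 < F' j x :=
        fun j hj x hx => out_pos hpos hw' (lp+1) (by omega) j hj x hx
      have hAB : Tendsto (fun x => (u j₀ * F j₀ x) / (v j₀ * F' j₀ x)) atTop (𝓝 1) := by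
        refine ab_lemma (A := fun x => u j₀ * F j₀ x) (B := fun x => v j₀ * F' j₀ x)
          (R := fun x => ∑ j ∈ Finset.Ico (j₀+1) (n (lp+1)), u j * F j x)
          (R' := fun x => ∑ j ∈ Finset.Ico (j₀+1) (n (lp+1)), v j * F' j x)
          (S := fun x => ∑ j ∈ Finset.Ico j₀ (n (lp+1)),
            (u j * F j x - v j * F' j x))
          ?_ hS ?_ ?_ ?_ ?_ ?_ ?_ ?_ ?_
        · intro x
          simp only [Finset.sum_eq_sum_Ico_succ_bot hj₀lt, Finset.sum_sub_distrib]
          ring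
        · exact (hFtop j₀ hj₀n).const_mul_atTop huj
        · exact (hF'top j₀ hj₀n).const_mul_atTop hvj
        · have h1 : Tendsto (fun x => ∑ j ∈ Finset.Ico (j₀+1) (n (lp+1)),
              (u j * F j x) / (u j₀ * F j₀ x)) atTop
              (𝓝 (∑ j ∈ Finset.Ico (j₀+1) (n (lp+1)), (0:ℝ))) := by
            refine tendsto_finset_sum _ (fun j hj => ?_)
            obtain ⟨hj1, hj2⟩ := Finset.mem_Ico.mp hj
            have h2 : Tendsto (fun x => (u j / u j₀) * (F j x / F j₀ x)) atTop
                (𝓝 ((u j / u j₀) * 0)) :=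
              (out_ratio hpos hw hlpL (by omega) hj2).const_mul _
            rw [mul_zero] at h2
            refine h2.congr (fun x => ?_)
            rw [mul_div_mul_comm]
          simp only [Finset.sum_const, smul_zero] at h1
          refine h1.congr (fun x => ?_)
          rw [eq_comm, Finset.sum_div]
        · have h1 : Tendsto (fun x => ∑ j ∈ Finset.Ico (j₀+1) (n (lp+1)),
              (v j * F' j x) / (v j₀ * F' j₀ x)) atTop
              (𝓝 (∑ j ∈ Finset.Ico (j₀+1) (n (lp+1)), (0:ℝ))) := by
            refine tendsto_finset_sum _ (fun j hj => ?_)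
            obtain ⟨hj1, hj2⟩ := Finset.mem_Ico.mp hj
            have h2 : Tendsto (fun x => (v j / v j₀) * (F' j x / F' j₀ x)) atTop
                (𝓝 ((v j / v j₀) * 0)) :=
              (out_ratio hpos hw' hlpL (by omega) hj2).const_mul _
            rw [mul_zero] at h2
            refine h2.congr (fun x => ?_)
            rw [mul_div_mul_comm]
          simp only [Finset.sum_const, smul_zero] at h1
          refine h1.congr (fun x => ?_)
          rw [eq_comm, Finset.sum_div]
        · filter_upwards [eventually_gt_atTop (0:ℝ)] with x hx
          exact mul_pos huj (hFpos j₀ hj₀n x hx)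
        · filter_upwards [eventually_gt_atTop (0:ℝ)] with x hx
          exact mul_pos hvj (hF'pos j₀ hj₀n x hx)
        · filter_upwards [eventually_gt_atTop (0:ℝ)] with x hx
          refine Finset.sum_nonneg (fun j hj => ?_)
          obtain ⟨hj1, hj2⟩ := Finset.mem_Ico.mp hj
          exact le_of_lt (mul_pos (hu j (by omega) hj2) (hFpos j hj2 x hx))
        · filter_upwards [eventually_gt_atTop (0:ℝ)] with x hx
          refine Finset.sum_nonneg (fun j hj => ?_)
          obtain ⟨hj1, hj2⟩ := Finset.mem_Ico.mp hj
          exact le_of_lt (mul_pos (hv j (by omega) hj2) (hF'pos j hj2 x hx))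
      have hFF : Tendsto (fun x => F j₀ x / F' j₀ x) atTop (𝓝 (v j₀ / u j₀)) := by
        have h2 := hAB.mul (tendsto_const_nhds (x := v j₀ / u j₀) (f := atTop))
        rw [one_mul] at h2
        refine h2.congr' ?_
        filter_upwards [eventually_gt_atTop (0:ℝ)] with x hx
        have h3 : F' j₀ x ≠ 0 := (hF'pos j₀ hj₀n x hx).ne'
        field_simp
      have hgg : Tendsto (fun x => g j₀ x - g' j₀ x) atTop
          (𝓝 (Real.log (v j₀ / u j₀))) := by
        refine exp_ratio (div_pos hvj huj) ?_ ?_ (hFF.congr (fun x => by rw [hFg, hFg']))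
        · exact g_top hpos hw hlpL hj₀n
        · exact g_top hpos hw' hlpL hj₀n
      have hsum2 : Tendsto (fun x => ∑ k ∈ Finset.Ico 0 (n lp),
          (w (lp+1) j₀ k * expOut n w lp k x - w' (lp+1) j₀ k * expOut n w' lp k x))
          atTop (𝓝 (Real.log (v j₀ / u j₀))) := by
        refine hgg.congr (fun x => ?_)
        simp only [hg, hg', Finset.sum_sub_distrib, Finset.range_eq_Ico]
      obtain ⟨hc0, hrow, hlow⟩ := IH lp (Nat.lt_succ_self lp) hlpL (n lp) 0
        (by simp) (w (lp+1) j₀) (w' (lp+1) j₀) _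
        (fun k _ hk => hw.1 lp hlpL j₀ hj₀n k hk)
        (fun k _ hk => hw'.1 lp hlpL j₀ hj₀n k hk) hsum2
      have hlown : ∀ l' < lp, ∀ i < n (l' + 1), ∀ j < n l',
          w (l' + 1) i j = w' (l' + 1) i j := by
        intro l' hl' i hi j hj
        exact hlow (hpos lp hlpL.le) l' hl' i hi (fun _ => Nat.zero_le i) j hj
      have huv : u j₀ = v j₀ := by
        rcases Real.log_eq_zero.mp hc0 with h6 | h6 | h6
        · exact absurd h6 (div_pos hvj huj).ne'
        · have := (div_eq_one_iff_eq huj.ne').mp h6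
          exact this.symm
        · nlinarith [div_pos hvj huj]
      have hgeq : ∀ x, g j₀ x = g' j₀ x := by
        intro x
        simp only [hg, hg']
        refine Finset.sum_congr rfl (fun k hk => ?_)
        rw [hrow k (Nat.zero_le k) (mem_range.mp hk),
          out_congr lp hlown k (mem_range.mp hk) x]
      have hFeqj : ∀ x, expOut n w (lp+1) j₀ x = expOut n w' (lp+1) j₀ x := by
        intro x
        show F j₀ x = F' j₀ x
        rw [hFg, hFg', hgeq]
      have hS2 : Tendsto (fun x => ∑ j ∈ Finset.Ico (j₀+1) (n (lp+1)),
          (u j * F j x - v j * F' j x)) atTop (𝓝 c) := by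
        refine hS.congr (fun x => ?_)
        simp only [Finset.sum_eq_sum_Ico_succ_bot hj₀lt, hFeqj x, huv]
        ring
      obtain ⟨hc, hrows, hpart⟩ := IHM (j₀+1) (by omega) u v c
        (fun j hj1 hj2 => hu j (by omega) hj2)
        (fun j hj1 hj2 => hv j (by omega) hj2) hS2
      refine ⟨hc, ?_, ?_⟩
      · intro j hj1 hj2
        rcases eq_or_lt_of_le hj1 with h | h
        · rw [← h]; exact huv
        · exact hrows j (by omega) hj2
      · intro _ l' hl' i hi hcond j hj
        rcases Nat.lt_succ_iff_lt_or_eq.mp hl' with h | h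
        · exact hlown l' h i hi j hj
        · subst h
          have hji : j₀ ≤ i := hcond rfl
          rcases eq_or_lt_of_le hji with h7 | h7
          · rw [← h7]; exact hrow j (Nat.zero_le j) hj
          · have h8 : j₀ + 1 < n (l' + 1) := by omega
            exact hpart h8 l' (Nat.lt_succ_self l') i hi (fun _ => by omega) j hj

/-- **(Proposition pr:exp: identifiability of the exponential network).** Let a
fully-connected layered feed-forward network of depth `L ≥ 1` with one source and one sink
have activation `f x = e^x - 1`. If `W, W̃ ∈ W_o` are two weight families whose measured
functions coincide on all of `ℝ`, then `W = W̃` (they agree on every edge of the network):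
the network with this activation is identifiable within the class `W_o` by exciting the
source and measuring the sink. -/
theorem stmt_16 (L : ℕ) (hL : 1 ≤ L) (n : ℕ → ℕ) (hn0 : n 0 = 1) (hnL : n L = 1)
    (hpos : ∀ l ≤ L, 0 < n l)
    (w w' : ℕ → ℕ → ℕ → ℝ) (hw : Wo L n w) (hw' : Wo L n w')
    (hF : ∀ x : ℝ, expOut n w L 0 x = expOut n w' L 0 x) :
    ∀ l < L, ∀ i < n (l + 1), ∀ j < n l, w (l + 1) i j = w' (l + 1) i j := by
  obtain ⟨lp, rfl⟩ : ∃ lp, L = lp + 1 := ⟨L - 1, by omega⟩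
  have hlpL : lp < lp + 1 := Nat.lt_succ_self lp
  have h00 : 0 < n (lp + 1) := hpos (lp + 1) le_rfl
  have hgeq : ∀ x : ℝ, ∑ k ∈ Finset.Ico 0 (n lp),
      (w (lp+1) 0 k * expOut n w lp k x - w' (lp+1) 0 k * expOut n w' lp k x) = 0 := by
    intro x
    have h1 := hF x
    simp only [expOut] at h1
    have h2 : Real.exp (∑ k ∈ Finset.range (n lp), w (lp+1) 0 k * expOut n w lp k x)
        = Real.exp (∑ k ∈ Finset.range (n lp), w' (lp+1) 0 k * expOut n w' lp k x) := by
      linarith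
    have h3 := Real.exp_eq_exp.mp h2
    rw [← Finset.range_eq_Ico, Finset.sum_sub_distrib, sub_eq_zero]
    exact h3
  have hT : Tendsto (fun x => ∑ k ∈ Finset.Ico 0 (n lp),
      (w (lp+1) 0 k * expOut n w lp k x - w' (lp+1) 0 k * expOut n w' lp k x))
      atTop (𝓝 0) := tendsto_const_nhds.congr (fun x => (hgeq x).symm)
  obtain ⟨-, hrow, hlow⟩ := master (lp+1) n hn0 hpos w w' hw hw' lp hlpL (n lp) 0
    (by simp) (w (lp+1) 0) (w' (lp+1) 0) 0
    (fun k _ hk => hw.1 lp hlpL 0 h00 k hk)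
    (fun k _ hk => hw'.1 lp hlpL 0 h00 k hk) hT
  intro l hl i hi j hj
  rcases Nat.lt_succ_iff_lt_or_eq.mp hl with h | h
  · exact hlow (hpos lp hlpL.le) l h i hi (fun _ => Nat.zero_le i) j hj
  · subst h
    have hi1 : i = 0 := by omega
    subst hi1
    exact hrow j (Nat.zero_le j) hj
end
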